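/- On the Lie algebra rh3 with complex structure Je1=e2, Je2=-e1, Je3=e4, Je4=-e3, for every σ>0 the pair θ = -e^4, Ω = σ(e^{12}+e^{34}) is a locally conformally Kähler structure: dθ=0, dΩ = θ∧Ω, Ω is J-invariant, and Ω(x,Jx)>0 for all nonzero x. -/

import Mathlib

set_option maxHeartbeats 1000000 in
/-- On `rh3` with complex structure `Je1=e2, Je2=-e1, Je3=e4, Je4=-e3`, for every
`σ > 0` the pair `θ = -e⁴`, `Ω = σ(e¹² + e³⁴)` is an lcK structure: `dθ = 0`,
`dΩ = θ ∧ Ω`, `Ω` is `J`-invariant, and `Ω(x, Jx) > 0` for all nonzero `x`. -/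
theorem stmt4 (L : Type*) [LieRing L] [LieAlgebra ℝ L]
    (b : Module.Basis (Fin 4) ℝ L)
    (h01 : ⁅b 0, b 1⁆ = b 2) (h02 : ⁅b 0, b 2⁆ = 0) (h03 : ⁅b 0, b 3⁆ = 0)
    (h12 : ⁅b 1, b 2⁆ = 0) (h13 : ⁅b 1, b 3⁆ = 0) (h23 : ⁅b 2, b 3⁆ = 0)
    (J : L →ₗ[ℝ] L)
    (hJ0 : J (b 0) = b 1) (hJ1 : J (b 1) = -(b 0))
    (hJ2 : J (b 2) = b 3) (hJ3 : J (b 3) = -(b 2))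
    (σ : ℝ) (hσ : 0 < σ)
    (θ : L →ₗ[ℝ] ℝ)
    (hθ0 : θ (b 0) = 0) (hθ1 : θ (b 1) = 0) (hθ2 : θ (b 2) = 0) (hθ3 : θ (b 3) = -1)
    (Ω : L →ₗ[ℝ] L →ₗ[ℝ] ℝ) (halt : ∀ x y : L, Ω x y = - Ω y x)
    (hΩ01 : Ω (b 0) (b 1) = σ) (hΩ02 : Ω (b 0) (b 2) = 0) (hΩ03 : Ω (b 0) (b 3) = 0)
    (hΩ12 : Ω (b 1) (b 2) = 0) (hΩ13 : Ω (b 1) (b 3) = 0) (hΩ23 : Ω (b 2) (b 3) = σ) :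
    (∀ x y : L, θ ⁅x, y⁆ = 0) ∧
    (∀ x y z : L, -Ω ⁅x, y⁆ z + Ω ⁅x, z⁆ y - Ω ⁅y, z⁆ x
        = θ x * Ω y z - θ y * Ω x z + θ z * Ω x y) ∧
    (∀ x y : L, Ω (J x) (J y) = Ω x y) ∧
    (∀ x : L, x ≠ 0 → 0 < Ω x (J x)) := by
  have hb : ∀ x : L, x = b.repr x 0 • b 0 + b.repr x 1 • b 1 + b.repr x 2 • b 2
      + b.repr x 3 • b 3 := fun x => by
    have h := (b.sum_repr x).symm; rw [Fin.sum_univ_four] at h; exact h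
  have h10 : ⁅b 1, b 0⁆ = -b 2 := by rw [← lie_skew, h01]
  have h20 : ⁅b 2, b 0⁆ = 0 := by rw [← lie_skew, h02]; simp
  have h30 : ⁅b 3, b 0⁆ = 0 := by rw [← lie_skew, h03]; simp
  have h21 : ⁅b 2, b 1⁆ = 0 := by rw [← lie_skew, h12]; simp
  have h31 : ⁅b 3, b 1⁆ = 0 := by rw [← lie_skew, h13]; simp
  have h32 : ⁅b 3, b 2⁆ = 0 := by rw [← lie_skew, h23]; simp
  have hΩd : ∀ x : L, Ω x x = 0 := fun x => by have := halt x x; linarith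
  have hΩ10 : Ω (b 1) (b 0) = -σ := by rw [halt, hΩ01]
  have hΩ20 : Ω (b 2) (b 0) = 0 := by rw [halt, hΩ02]; simp
  have hΩ30 : Ω (b 3) (b 0) = 0 := by rw [halt, hΩ03]; simp
  have hΩ21 : Ω (b 2) (b 1) = 0 := by rw [halt, hΩ12]; simp
  have hΩ31 : Ω (b 3) (b 1) = 0 := by rw [halt, hΩ13]; simp
  have hΩ32 : Ω (b 3) (b 2) = -σ := by rw [halt, hΩ23]
  refine ⟨fun x y => ?_, fun x y z => ?_, fun x y => ?_, fun x hx => ?_⟩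
  · rw [hb x, hb y]
    simp [lie_add, add_lie, lie_smul, smul_lie, h01, h02, h03, h12, h13, h23,
      h10, h20, h30, h21, h31, h32, hθ2]
  · rw [hb x, hb y, hb z]
    simp only [lie_add, add_lie, lie_smul, smul_lie, h01, h02, h03, h12, h13, h23,
      h10, h20, h30, h21, h31, h32, lie_self, smul_zero, zero_lie, lie_zero, smul_neg,
      map_add, map_smul, map_neg, map_zero, LinearMap.add_apply, LinearMap.smul_apply,
      LinearMap.neg_apply, LinearMap.zero_apply, smul_eq_mul,
      hΩ01, hΩ02, hΩ03, hΩ12, hΩ13, hΩ23, hΩ10, hΩ20, hΩ30, hΩ21, hΩ31, hΩ32, hΩd,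
      hθ0, hθ1, hθ2, hθ3]
    ring
  · rw [hb x, hb y]
    simp only [map_add, map_smul, map_neg, hJ0, hJ1, hJ2, hJ3,
      LinearMap.add_apply, LinearMap.smul_apply, LinearMap.neg_apply, smul_eq_mul,
      hΩ01, hΩ02, hΩ03, hΩ12, hΩ13, hΩ23, hΩ10, hΩ20, hΩ30, hΩ21, hΩ31, hΩ32, hΩd,
      smul_neg, neg_neg, map_sub, mul_neg, neg_mul]
    ring
  · have key : Ω x (J x) = σ * ((b.repr x 0)^2 + (b.repr x 1)^2 + (b.repr x 2)^2
        + (b.repr x 3)^2) := by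
      conv_lhs => rw [hb x]
      simp only [map_add, map_smul, map_neg, hJ0, hJ1, hJ2, hJ3,
        LinearMap.add_apply, LinearMap.smul_apply, LinearMap.neg_apply, smul_eq_mul,
        hΩ01, hΩ02, hΩ03, hΩ12, hΩ13, hΩ23, hΩ10, hΩ20, hΩ30, hΩ21, hΩ31, hΩ32, hΩd,
        smul_neg, neg_neg, mul_neg, neg_mul]
      ring
    rw [key]
    have hne : b.repr x 0 ≠ 0 ∨ b.repr x 1 ≠ 0 ∨ b.repr x 2 ≠ 0 ∨ b.repr x 3 ≠ 0 := by
      by_contra h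
      push_neg at h
      obtain ⟨h0, h1, h2, h3⟩ := h
      exact hx (by rw [hb x, h0, h1, h2, h3]; simp)
    have : (0:ℝ) < (b.repr x 0)^2 + (b.repr x 1)^2 + (b.repr x 2)^2 + (b.repr x 3)^2 := by
      rcases hne with h | h | h | h <;>
        nlinarith [sq_nonneg (b.repr x 0), sq_nonneg (b.repr x 1), sq_nonneg (b.repr x 2),
          sq_nonneg (b.repr x 3), pow_two_pos_of_ne_zero h]
    positivity
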